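/- Let G be a finite group acting faithfully by ring automorphisms on an integral domain S such that the order of G is invertible in S, and let R = S^G. Let E be a finitely generated torsion-free S-module equipped with a semilinear G-action (i.e., an additive G-action satisfying g·(s·e) = (g·s)·(g·e) for g ∈ G, s ∈ S, e ∈ E). Then the kernel of the natural S-module homomorphism σ: E^G ⊗_R S → E, e ⊗ s ↦ s·e, is exactly the torsion submodule of E^G ⊗_R S; equivalently, the induced map (E^G ⊗_R S)/torsion → E is injective. (This is the algebraic core of Lemma 4.12, which states that π^T(D(E)) injects into E.) -/
import Mathlib

open scoped TensorProduct

open Finset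

set_option maxHeartbeats 1000000 in
set_option synthInstance.maxHeartbeats 200000 in
theorem aux_kernel_torsion
    (G : Type) [Group G] [Fintype G] (S : Type) [CommRing S] [IsDomain S]
    [MulSemiringAction G S]
    (hinv : IsUnit ((Fintype.card G : ℕ) : S))
    (R : Subring S) (hR : ∀ s : S, s ∈ R ↔ ∀ g : G, g • s = s)
    (E : Type) [AddCommGroup E] [Module S E]
    [DistribMulAction G E]
    (hsemi : ∀ (g : G) (s : S) (e : E), g • (s • e) = (g • s) • (g • e))
    (EG : Submodule ↥R E) (hEG : ∀ e : E, e ∈ EG ↔ ∀ g : G, g • e = e) :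
    ∀ (n : ℕ) (s : Fin n → S) (e : Fin n → ↥EG),
      (∑ i, s i • (e i : E)) = 0 →
      (∑ i, s i ⊗ₜ[↥R] (e i)) ∈ Submodule.torsion S (S ⊗[↥R] ↥EG) := by
  classical
  -- preliminaries
  have hgne : ∀ (g : G) (a : S), a ≠ 0 → g • a ≠ 0 := by
    intro g a ha h
    apply ha
    have := congrArg (fun x => g⁻¹ • x) h
    simpa using this
  have hcard0 : ((Fintype.card G : ℕ) : S) ≠ 0 := hinv.ne_zero
  set c : S := ↑(hinv.unit⁻¹) with hc_def
  have hc : ((Fintype.card G : ℕ) : S) * c = 1 := by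
    have h := hinv.unit.mul_inv
    rwa [hinv.unit_spec] at h
  have hsmul_cast : ∀ (g : G) (k : ℕ), g • ((k : ℕ) : S) = ((k : ℕ) : S) := by
    intro g k
    exact map_natCast (MulSemiringAction.toRingHom G S g) k
  have hgc : ∀ g : G, g • c = c := by
    intro g
    have h1 : ((Fintype.card G : ℕ) : S) * (g • c) = 1 := by
      have := congrArg (g • ·) hc
      simpa [smul_mul', hsmul_cast g] using this
    exact mul_left_cancel₀ hcard0 (h1.trans hc.symm)
  have heinv : ∀ (g : G) (e : ↥EG), g • (e : E) = (e : E) := by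
    intro g e
    exact (hEG e).mp e.2 g
  intro n
  induction n with
  | zero => intro s e _; simp
  | succ n ih =>
    intro s e hrel
    by_cases hs : ∀ i, s i = 0
    · have : (∑ i, s i ⊗ₜ[↥R] (e i)) = 0 := by
        apply Finset.sum_eq_zero
        intro i _
        rw [hs i, TensorProduct.zero_tmul]
      rw [this]; exact Submodule.zero_mem _
    push_neg at hs
    obtain ⟨i₀, hi₀⟩ := hs
    set a : S := s i₀ with ha_def
    set P : S := ∏ g ∈ Finset.univ.erase (1 : G), g • a with hP_def
    set N : S := ∏ g : G, g • a with hN_def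
    have hNP : N = a * P := by
      rw [hN_def, hP_def,
        ← Finset.mul_prod_erase Finset.univ (fun g => g • a) (Finset.mem_univ (1 : G)),
        one_smul]
    have hNne : N ≠ 0 := by
      rw [hN_def]
      exact Finset.prod_ne_zero_iff.mpr fun g _ => hgne g a hi₀
    have hNinv : ∀ g : G, g • N = N := by
      intro g
      rw [hN_def]
      rw [show (g • ∏ g' : G, g' • a) = ∏ g' : G, g • g' • a from
        map_prod (MulSemiringAction.toRingHom G S g) _ _]
      calc (∏ g' : G, g • g' • a) = ∏ g' : G, (g * g') • a := by
            refine Finset.prod_congr rfl fun g' _ => ?_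
            rw [mul_smul]
        _ = ∏ g' : G, g' • a :=
            Fintype.prod_equiv (Equiv.mulLeft g) _ _ (fun g' => rfl)
    -- the averaged relation coefficients
    set r : Fin (n+1) → S := fun i => c * ∑ g : G, g • (P * s i) with hr_def
    have hrR : ∀ i, r i ∈ R := by
      intro i
      rw [hR]
      intro g
      have h1 : g • r i = (g • c) * (∑ g' : G, g • g' • (P * s i)) := by
        rw [hr_def, smul_mul', Finset.smul_sum]
      rw [h1, hgc g, hr_def]
      congr 1
      calc (∑ g' : G, g • g' • (P * s i)) = ∑ g' : G, (g * g') • (P * s i) := by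
            refine Finset.sum_congr rfl fun g' _ => ?_
            rw [mul_smul]
        _ = ∑ g' : G, g' • (P * s i) :=
            Fintype.sum_equiv (Equiv.mulLeft g) _ _ (fun g' => rfl)
    have hri₀ : r i₀ = N := by
      have h1 : P * s i₀ = N := by rw [hNP, ← ha_def]; ring
      rw [hr_def]
      simp only [h1, hNinv]
      rw [Finset.sum_const, card_univ, nsmul_eq_mul, ← mul_assoc, mul_comm c, hc, one_mul]
    have key : ∀ i, r i • (e i : E) = c • ∑ g : G, g • ((P * s i) • (e i : E)) := by
      intro i
      rw [hr_def, mul_smul, Finset.sum_smul]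
      congr 1
      refine Finset.sum_congr rfl fun g _ => ?_
      rw [hsemi g (P * s i) (e i : E), heinv g (e i)]
    have hg0 : ∀ g : G, ∑ i, g • ((P * s i) • (e i : E)) = 0 := by
      intro g
      rw [← Finset.smul_sum]
      have : ∑ i, (P * s i) • (e i : E) = 0 := by
        calc ∑ i, (P * s i) • (e i : E) = P • ∑ i, s i • (e i : E) := by
              rw [Finset.smul_sum]
              exact Finset.sum_congr rfl fun i _ => mul_smul P (s i) _
          _ = 0 := by rw [hrel, smul_zero]
      rw [this, smul_zero]
    have hrel_r : ∑ i, r i • (e i : E) = 0 := by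
      calc ∑ i, r i • (e i : E)
          = ∑ i, c • ∑ g : G, g • ((P * s i) • (e i : E)) :=
            Finset.sum_congr rfl fun i _ => key i
        _ = c • ∑ i, ∑ g : G, g • ((P * s i) • (e i : E)) := (Finset.smul_sum).symm
        _ = c • ∑ g : G, ∑ i, g • ((P * s i) • (e i : E)) := by rw [Finset.sum_comm]
        _ = 0 := by
            rw [Finset.sum_congr rfl fun g _ => hg0 g]
            simp
    -- pack r into R
    set r' : Fin (n+1) → ↥R := fun i => ⟨r i, hrR i⟩ with hr'_def
    have hrsmul : ∀ i, ((r' i • e i : ↥EG) : E) = r i • (e i : E) := by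
      intro i
      rfl
    have hrelEG : ∑ i, r' i • e i = (0 : ↥EG) := by
      have h1 : ((∑ i, r' i • e i : ↥EG) : E) = 0 := by
        rw [Submodule.coe_sum]
        rw [Finset.sum_congr rfl fun i _ => hrsmul i]
        exact hrel_r
      exact_mod_cast h1
    have hz : (∑ i, (r i) ⊗ₜ[↥R] (e i)) = 0 := by
      have h1 : ∀ i, (r i) ⊗ₜ[↥R] (e i) = (1 : S) ⊗ₜ[↥R] (r' i • e i) := by
        intro i
        rw [← TensorProduct.smul_tmul]
        congr 1
        show r i = (↑(r' i) : S) * 1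
        rw [mul_one]
      rw [Finset.sum_congr rfl fun i _ => h1 i, ← TensorProduct.tmul_sum, hrelEG,
        TensorProduct.tmul_zero]
    set t : Fin (n+1) → S := fun i => N * s i - a * r i with ht_def
    have ht_i₀ : t i₀ = 0 := by rw [ht_def]; simp only [hri₀, ← ha_def]; ring
    have hNx : N • (∑ i, s i ⊗ₜ[↥R] (e i)) = ∑ i, t i ⊗ₜ[↥R] (e i) := by
      rw [Finset.smul_sum]
      have h2 : ∑ i, a • ((r i) ⊗ₜ[↥R] (e i)) = 0 := by
        rw [← Finset.smul_sum, hz, smul_zero]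
      calc ∑ i, N • (s i ⊗ₜ[↥R] (e i))
          = (∑ i, N • (s i ⊗ₜ[↥R] (e i))) - (∑ i, a • ((r i) ⊗ₜ[↥R] (e i))) := by
            rw [h2, sub_zero]
        _ = ∑ i, t i ⊗ₜ[↥R] (e i) := by
            rw [← Finset.sum_sub_distrib]
            refine Finset.sum_congr rfl fun i _ => ?_
            rw [TensorProduct.smul_tmul', TensorProduct.smul_tmul', ← TensorProduct.sub_tmul]
            rfl
    have hrel_t : ∑ i, t i • (e i : E) = 0 := by
      have h1 : ∀ i, t i • (e i : E) = N • (s i • (e i : E)) - a • (r i • (e i : E)) := by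
        intro i
        rw [ht_def]
        rw [sub_smul, mul_smul, mul_smul]
      rw [Finset.sum_congr rfl fun i _ => h1 i, Finset.sum_sub_distrib,
        ← Finset.smul_sum, ← Finset.smul_sum, hrel, hrel_r, smul_zero, smul_zero, sub_zero]
    have hsplit : ∑ i, t i ⊗ₜ[↥R] (e i)
        = ∑ j : Fin n, t (i₀.succAbove j) ⊗ₜ[↥R] (e (i₀.succAbove j)) := by
      rw [Fin.sum_univ_succAbove (fun i => t i ⊗ₜ[↥R] (e i)) i₀, ht_i₀,
        TensorProduct.zero_tmul, zero_add]
    have hrel_t' : ∑ j : Fin n, t (i₀.succAbove j) • ((e (i₀.succAbove j)) : E) = 0 := by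
      have h1 := hrel_t
      rw [Fin.sum_univ_succAbove (fun i => t i • (e i : E)) i₀, ht_i₀, zero_smul,
        zero_add] at h1
      exact h1
    have htor : (∑ i, t i ⊗ₜ[↥R] (e i)) ∈ Submodule.torsion S (S ⊗[↥R] ↥EG) := by
      rw [hsplit]
      exact ih (fun j => t (i₀.succAbove j)) (fun j => e (i₀.succAbove j)) hrel_t'
    rw [Submodule.mem_torsion_iff] at htor ⊢
    obtain ⟨m, hm⟩ := htor
    refine ⟨⟨(m : S) * N, mul_mem m.2 (mem_nonZeroDivisors_of_ne_zero hNne)⟩, ?_⟩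
    rw [← hNx] at hm
    have hm2 : (m : S) • N • (∑ i, s i ⊗ₜ[↥R] (e i)) = 0 := hm
    rw [Submonoid.smul_def]
    show ((m : S) * N) • (∑ i, s i ⊗ₜ[↥R] (e i)) = 0
    rw [mul_smul]
    exact hm2

/-- Let `G` be a finite group acting faithfully by ring automorphisms on
an integral domain `S` with `|G|` invertible in `S`, and let `R = S^G`. Let `E` be a
finitely generated torsion-free `S`-module with a semilinear `G`-action. Then the kernel
of the natural map `σ : S ⊗[R] E^G → E`, `s ⊗ e ↦ s • e`, is exactly the torsion
submodule of `S ⊗[R] E^G`. -/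
theorem kernel_of_counit_eq_torsion
    (G : Type) [Group G] [Fintype G] (S : Type) [CommRing S] [IsDomain S]
    [MulSemiringAction G S] [FaithfulSMul G S]
    (hinv : IsUnit ((Fintype.card G : ℕ) : S))
    (R : Subring S) (hR : ∀ s : S, s ∈ R ↔ ∀ g : G, g • s = s)
    (E : Type) [AddCommGroup E] [Module S E] [Module.Finite S E]
    [DistribMulAction G E]
    (hsemi : ∀ (g : G) (s : S) (e : E), g • (s • e) = (g • s) • (g • e))
    (htf : Submodule.torsion S E = ⊥)
    (EG : Submodule ↥R E) (hEG : ∀ e : E, e ∈ EG ↔ ∀ g : G, g • e = e)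
    (σ : S ⊗[↥R] ↥EG →ₗ[S] E)
    (hσ : ∀ (s : S) (e : ↥EG), σ (s ⊗ₜ[↥R] e) = s • (e : E)) :
    LinearMap.ker σ = Submodule.torsion S (S ⊗[↥R] ↥EG) := by
  apply le_antisymm
  · -- ker ⊆ torsion
    intro x hx
    rw [LinearMap.mem_ker] at hx
    obtain ⟨T, hT⟩ := TensorProduct.exists_finset x
    set F : Fin T.card → S × ↥EG := fun i => ↑(T.equivFin.symm i) with hF
    have hx' : x = ∑ i : Fin T.card, (F i).1 ⊗ₜ[↥R] (F i).2 := by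
      rw [hT, ← Finset.sum_attach T (fun p => p.1 ⊗ₜ[↥R] p.2), ← Finset.univ_eq_attach]
      exact Fintype.sum_equiv T.equivFin (fun p => (p : S × ↥EG).1 ⊗ₜ[↥R] (p : S × ↥EG).2)
        (fun i => (F i).1 ⊗ₜ[↥R] (F i).2) (fun p => by rw [hF]; simp)
    have hrel : ∑ i : Fin T.card, (F i).1 • ((F i).2 : E) = 0 := by
      have h1 := hx
      rw [hx', map_sum] at h1
      simpa [hσ] using h1
    rw [hx']
    exact aux_kernel_torsion G S hinv R hR E hsemi EG hEG T.card _ _ hrel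
  · -- torsion ⊆ ker
    intro x hx
    rw [Submodule.mem_torsion_iff] at hx
    obtain ⟨m, hm⟩ := hx
    rw [LinearMap.mem_ker]
    have hm' : (m : S) • x = 0 := hm
    have h1 : (m : S) • σ x = 0 := by
      rw [← map_smul, hm', map_zero]
    have h2 : σ x ∈ Submodule.torsion S E := ⟨m, h1⟩
    rw [htf] at h2
    simpa using h2
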